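/- Suppose φ is even with period T, satisfies the multiplication property φ(nz) = R_n(φ(z)) for a family of functions R_n, and 2Nε = MT for integers N ≥ 1, M. Then for each n ≥ 1 the function Φ_n(x,y) = R_{2nN}(x) − R_{2nN}(y) vanishes at every point of the curve C = {(φ(t), φ(t+ε)) : t}, i.e., R_{2nN}(φ(t)) = R_{2nN}(φ(t+ε)) for all t. -/

import Mathlib

lemma per_int (φ : ℂ → ℂ) (T : ℂ) (hper : ∀ z, φ (z + T) = φ z) :
    ∀ m : ℤ, ∀ z, φ (z + (m : ℂ) * T) = φ z := by
  have key : ∀ k : ℕ, ∀ z, φ (z + (k : ℂ) * T) = φ z := by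
    intro k
    induction k with
    | zero => simp
    | succ k ih =>
      intro z
      have : z + ((k : ℂ) + 1) * T = (z + (k : ℂ) * T) + T := by ring
      push_cast
      rw [this, hper, ih]
  intro m z
  rcases le_or_gt 0 m with h | h
  · lift m to ℕ using h
    exact_mod_cast key m z
  · have hm : ∃ k : ℕ, m = -(k : ℤ) := ⟨m.natAbs, by omega⟩
    obtain ⟨k, rfl⟩ := hm
    have := key k (z + (-(k : ℤ) : ℂ) * T)
    have h2 : z + (-(k : ℤ) : ℂ) * T + (k : ℂ) * T = z := by push_cast; ring
    rw [h2] at this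
    push_cast at this ⊢
    exact this.symm

/-- If `φ` is even, `T`-periodic, satisfies the multiplication property
`φ(kz) = R_k(φ(z))`, and `2Nε = MT`, then `Φ_n(x,y) = R_{2nN}(x) − R_{2nN}(y)`
vanishes on the curve `{(φ(t), φ(t+ε))}`. -/
theorem multiplication_property_gives_solutions (φ : ℂ → ℂ) (T ε : ℂ)
    (R : ℕ → ℂ → ℂ)
    (heven : ∀ z, φ (-z) = φ z) (hper : ∀ z, φ (z + T) = φ z)
    (hmult : ∀ k : ℕ, 1 ≤ k → ∀ z, φ ((k : ℂ) * z) = R k (φ z))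
    (N : ℕ) (hN : 1 ≤ N) (M : ℤ) (hcond : 2 * (N : ℂ) * ε = (M : ℂ) * T) :
    ∀ n : ℕ, 1 ≤ n → ∀ t : ℂ, R (2 * n * N) (φ t) = R (2 * n * N) (φ (t + ε)) := by
  intro n hn t
  have hk : 1 ≤ 2 * n * N := Nat.mul_pos (Nat.mul_pos (by norm_num) hn) hN
  rw [← hmult _ hk t, ← hmult _ hk (t + ε)]
  have h1 : ((2 * n * N : ℕ) : ℂ) * (t + ε) =
      ((2 * n * N : ℕ) : ℂ) * t + (((n : ℤ) * M : ℤ) : ℂ) * T := by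
    push_cast
    have : (n : ℂ) * (2 * (N : ℂ) * ε) = (n : ℂ) * ((M : ℂ) * T) := by rw [hcond]
    linear_combination this
  rw [h1, per_int φ T hper ((n : ℤ) * M)]
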